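/- Let G_k be the graph formed by 3k pentagons A_i = (a_i, b_i, c_i, d_i, e_i, a_i) joined by edges b_i e_{i+1} for 1 ≤ i ≤ 3k−1. Then the path P = (e_1, a_1, b_1, e_2, a_2, b_2, ..., e_{3k}, a_{3k}, b_{3k}) is an isometric path in G_k of length 9k − 1. -/

import Mathlib

open SimpleGraph

variable {V : Type*}

/-- `p` restricted to `{0,…,k}` is an isometric path of length `k` in `G`. -/
def IsIsomPath (G : SimpleGraph V) (p : ℕ → V) (k : ℕ) : Prop :=
  ∀ i j, i ≤ k → j ≤ k → G.dist (p i) (p j) = max i j - min i j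

def pathVerts (p : ℕ → V) (k : ℕ) : Set V := {x | ∃ i, i ≤ k ∧ p i = x}

noncomputable def ecc (G : SimpleGraph V) [Fintype V] (v : V) : ℕ :=
  Finset.univ.sup (fun u => G.dist v u)

noncomputable def grad (G : SimpleGraph V) [Fintype V] : ℕ :=
  sInf (Set.range (ecc G))

noncomputable def gdiam (G : SimpleGraph V) [Fintype V] : ℕ :=
  Finset.univ.sup (fun v => ecc G v)

def IsMultipacking (G : SimpleGraph V) [Fintype V] (M : Set V) : Prop :=
  ∀ v : V, ∀ r : ℕ, 1 ≤ r → r ≤ gdiam G →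
    (M ∩ {u | G.dist v u ≤ r}).ncard ≤ r

noncomputable def mp (G : SimpleGraph V) [Fintype V] : ℕ :=
  sSup {n | ∃ M : Set V, IsMultipacking G M ∧ M.ncard = n}

def IsDomBroadcast (G : SimpleGraph V) [Fintype V] (f : V → ℕ) : Prop :=
  (∀ v, f v ≤ gdiam G) ∧ ∀ u : V, ∃ v : V, 1 ≤ f v ∧ G.dist u v ≤ f v

noncomputable def gammaB (G : SimpleGraph V) [Fintype V] : ℕ :=
  sInf {n | ∃ f : V → ℕ, IsDomBroadcast G f ∧ ∑ v, f v = n}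

noncomputable def gammaDom (G : SimpleGraph V) [Fintype V] : ℕ :=
  sInf {n | ∃ D : Finset V, (∀ u : V, ∃ v ∈ D, u = v ∨ G.Adj u v) ∧ D.card = n}

def IsFracMP (G : SimpleGraph V) [Fintype V] (w : V → ℝ) : Prop :=
  (∀ v, 0 ≤ w v) ∧ ∀ v : V, ∀ r : ℕ, 1 ≤ r →
    (∑ u ∈ Finset.univ.filter (fun u => G.dist v u ≤ r), w u) ≤ r

noncomputable def mpf (G : SimpleGraph V) [Fintype V] : ℝ :=
  sSup {s | ∃ w : V → ℝ, IsFracMP G w ∧ ∑ v, w v = s}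

/-- A cactus: connected and every edge lies on at most one cycle. -/
def IsCactus (G : SimpleGraph V) : Prop :=
  G.Connected ∧ ∀ (u v : V) (c₁ : G.Walk u u) (c₂ : G.Walk v v),
    c₁.IsCycle → c₂.IsCycle → ∀ e, e ∈ c₁.edges → e ∈ c₂.edges →
      (∀ e', e' ∈ c₁.edges ↔ e' ∈ c₂.edges)

def pentRel (k : ℕ) (x y : Fin (3*k) × Fin 5) : Prop :=
  (x.1 = y.1 ∧ (x.2.val + 1) % 5 = y.2.val) ∨
  (x.1.val + 1 = y.1.val ∧ x.2.val = 1 ∧ y.2.val = 4)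

def Gk (k : ℕ) : SimpleGraph (Fin (3*k) × Fin 5) := SimpleGraph.fromRel (pentRel k)


private def phiG (k : ℕ) (x : Fin (3*k) × Fin 5) : ℤ :=
  3 * x.1.val + (if x.2.val = 4 then 0 else if x.2.val = 0 then 1
    else if x.2.val = 1 then 2 else 1)

private lemma phiG_adj {k : ℕ} {u v : Fin (3*k) × Fin 5} (h : (Gk k).Adj u v) :
    |phiG k u - phiG k v| ≤ 1 := by
  rw [Gk, SimpleGraph.fromRel_adj] at h
  have hu := u.2.isLt
  have hv := v.2.isLt
  unfold phiG
  rw [abs_le]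
  obtain ⟨hne, hc⟩ := h
  rcases hc with hc | hc <;> rcases hc with hc | hc
  · have h1 := congrArg Fin.val hc.1
    have h2 := hc.2
    constructor <;> split_ifs <;> omega
  · obtain ⟨h1, h2, h3⟩ := hc
    constructor <;> split_ifs <;> omega
  · have h1 := congrArg Fin.val hc.1
    have h2 := hc.2
    constructor <;> split_ifs <;> omega
  · obtain ⟨h1, h2, h3⟩ := hc
    constructor <;> split_ifs <;> omega

private lemma phiG_walk {k : ℕ} {u v : Fin (3*k) × Fin 5} (w : (Gk k).Walk u v) :
    |phiG k u - phiG k v| ≤ (w.length : ℤ) := by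
  induction w with
  | nil => simp
  | @cons a b c h w ih =>
    have h1 := phiG_adj h
    have h2 := abs_sub_le (phiG k a) (phiG k b) (phiG k c)
    simp only [SimpleGraph.Walk.length_cons]
    push_cast
    linarith

private lemma phiG_path (k : ℕ) (hk : 1 ≤ k) (t : ℕ) (ht : t ≤ 9 * k - 1) :
    phiG k ((⟨(t / 3) % (3 * k), Nat.mod_lt _ (by have := hk; omega)⟩ : Fin (3*k)),
      if t % 3 = 0 then (4 : Fin 5) else if t % 3 = 1 then 0 else 1) = t := by
  have h1 : (t / 3) % (3 * k) = t / 3 := Nat.mod_eq_of_lt (by omega)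
  unfold phiG
  have h3 : t % 3 = 0 ∨ t % 3 = 1 ∨ t % 3 = 2 := by omega
  rcases h3 with h | h | h <;> simp [h, h1] <;> omega

private lemma path_walk (k : ℕ) (hk : 1 ≤ k) :
    ∀ i j, i ≤ j → j ≤ 9 * k - 1 →
      ∃ w : (Gk k).Walk
        ((⟨(i / 3) % (3 * k), Nat.mod_lt _ (by have := hk; omega)⟩ : Fin (3*k)),
          if i % 3 = 0 then (4 : Fin 5) else if i % 3 = 1 then 0 else 1)
        ((⟨(j / 3) % (3 * k), Nat.mod_lt _ (by have := hk; omega)⟩ : Fin (3*k)),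
          if j % 3 = 0 then (4 : Fin 5) else if j % 3 = 1 then 0 else 1),
        w.length = j - i := by
  intro i j hij hj
  induction j, hij using Nat.le_induction with
  | base => exact ⟨SimpleGraph.Walk.nil, by simp⟩
  | succ n hn ih =>
    obtain ⟨w, hw⟩ := ih (by omega)
    have hadj : (Gk k).Adj
        ((⟨(n / 3) % (3 * k), Nat.mod_lt _ (by have := hk; omega)⟩ : Fin (3*k)),
          if n % 3 = 0 then (4 : Fin 5) else if n % 3 = 1 then 0 else 1)
        ((⟨((n+1) / 3) % (3 * k), Nat.mod_lt _ (by have := hk; omega)⟩ : Fin (3*k)),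
          if (n+1) % 3 = 0 then (4 : Fin 5) else if (n+1) % 3 = 1 then 0 else 1) := by
      unfold Gk
      rw [SimpleGraph.fromRel_adj]
      have hd1 : (n / 3) % (3 * k) = n / 3 := Nat.mod_eq_of_lt (by omega)
      have hd2 : ((n+1) / 3) % (3 * k) = (n+1) / 3 := Nat.mod_eq_of_lt (by omega)
      have h3 : n % 3 = 0 ∨ n % 3 = 1 ∨ n % 3 = 2 := by omega
      rcases h3 with h | h | h
      · have h' : (n+1) % 3 = 1 := by omega
        have he : (n+1)/3 = n/3 := by omega
        constructor
        · simp only [h, h', he]; simp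
        · left; left
          refine ⟨by simp [he], by simp only [h, h']; decide⟩
      · have h' : (n+1) % 3 = 2 := by omega
        have he : (n+1)/3 = n/3 := by omega
        constructor
        · simp only [h, h', he]; simp
        · left; left
          refine ⟨by simp [he], by simp only [h, h']; decide⟩
      · have h' : (n+1) % 3 = 0 := by omega
        have he : (n+1)/3 = n/3 + 1 := by omega
        constructor
        · intro hc
          have hc1 := congrArg (fun x => (Prod.fst x).val) hc
          simp only at hc1
          rw [hd1, hd2, he] at hc1
          omega
        · left; right
          refine ⟨?_, by simp only [h, h']; decide,
            by simp only [h, h']; decide⟩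
          show (n/3) % (3*k) + 1 = ((n+1)/3) % (3*k)
          rw [hd1, hd2, he]
    exact ⟨w.concat hadj, by simp [hw]; omega⟩

theorem Gk_diametral_path_isometric (k : ℕ) (hk : 1 ≤ k) :
    IsIsomPath (Gk k)
      (fun i => (⟨(i / 3) % (3 * k), Nat.mod_lt _ (by omega)⟩,
        if i % 3 = 0 then (4 : Fin 5) else if i % 3 = 1 then 0 else 1))
      (9 * k - 1) := by
  have key : ∀ i j, i ≤ j → j ≤ 9 * k - 1 →
      (Gk k).dist
        ((⟨(i / 3) % (3 * k), Nat.mod_lt _ (by omega)⟩ : Fin (3*k)),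
          if i % 3 = 0 then (4 : Fin 5) else if i % 3 = 1 then 0 else 1)
        ((⟨(j / 3) % (3 * k), Nat.mod_lt _ (by omega)⟩ : Fin (3*k)),
          if j % 3 = 0 then (4 : Fin 5) else if j % 3 = 1 then 0 else 1) = j - i := by
    intro i j hij hj
    obtain ⟨w, hw⟩ := path_walk k hk i j hij hj
    have hub := SimpleGraph.dist_le w
    rw [hw] at hub
    obtain ⟨w', hw'⟩ := w.reachable.exists_walk_length_eq_dist
    have hlb := phiG_walk w'
    rw [hw', phiG_path k hk i (by omega), phiG_path k hk j hj] at hlb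
    rw [abs_le] at hlb
    omega
  intro i j hi hj
  rcases le_total i j with h | h
  · rw [key i j h hj]; omega
  · rw [SimpleGraph.dist_comm, key j i h hi]; omega
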